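/- Let ρ:=ω₁+⋯+ω_n, let θ̂∨ be the highest coroot (the unique element of {α∨:α∈Φ⁺} such that θ̂∨−β∨ is a nonnegative integer combination of the simple coroots α₁∨,…,α_n∨ for every β∈Φ⁺), and let h:=⟨ρ,θ̂∨⟩+1 be the Coxeter number. Let w∈W satisfy ρ−w(ρ)∈hP, and define the affine map φ:V→V by φ(v):=w(v−ρ/h)+ρ/h. Then for any 𝐤∈ℕ[Φ]^W: φ maps P into P, and for all λ,μ∈P, (λ→_{tr,𝐤}μ or μ→_{tr,𝐤}λ) if and only if (φ(λ)→_{tr,𝐤}φ(μ) or φ(μ)→_{tr,𝐤}φ(λ)). That is, φ is an automorphism of the undirected graph of truncated interval-firing. -/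
import Mathlib

open RealInnerProductSpace Pointwise

noncomputable section

variable {V : Type*} [NormedAddCommGroup V] [InnerProductSpace ℝ V]

/-- The coroot `α∨ = 2α/⟨α,α⟩` associated to a vector `α`. -/
def coroot (α : V) : V := (2 / ⟪α, α⟫) • α

/-- The reflection `s_α(v) = v − ⟨v,α∨⟩α` across the hyperplane orthogonal to `α`. -/
def sRefl (α : V) (v : V) : V := v - ⟪v, coroot α⟫ • α

lemma inner_self_pos' {α : V} (hα : α ≠ 0) : 0 < ⟪α, α⟫ := by
  rw [real_inner_self_eq_norm_sq]; exact pow_pos (norm_pos_iff.2 hα) 2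

lemma inner_coroot' (v α : V) : ⟪v, coroot α⟫ = (2 / ⟪α, α⟫) * ⟪v, α⟫ := by
  simp [coroot, real_inner_smul_right]

lemma coroot_neg (α : V) : coroot (-α) = - coroot α := by
  simp [coroot, inner_neg_neg]

lemma inner_coroot_self {α : V} (hα : α ≠ 0) : ⟪α, coroot α⟫ = 2 := by
  have h : ⟪α, α⟫ ≠ 0 := ne_of_gt (inner_self_pos' hα)
  rw [inner_coroot']; field_simp

lemma sRefl_apply (α v : V) : sRefl α v = v - ((2 / ⟪α, α⟫) * ⟪v, α⟫) • α := by
  rw [sRefl, inner_coroot']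

lemma sRefl_add (α u v : V) : sRefl α (u + v) = sRefl α u + sRefl α v := by
  simp only [sRefl, inner_add_left, add_smul]; abel

lemma sRefl_smul (α : V) (c : ℝ) (v : V) : sRefl α (c • v) = c • sRefl α v := by
  simp only [sRefl, real_inner_smul_left, smul_sub, mul_smul]

lemma sRefl_inner (α u v : V) : ⟪sRefl α u, sRefl α v⟫ = ⟪u, v⟫ := by
  rcases eq_or_ne α 0 with rfl | hα
  · simp [sRefl, coroot]
  have h : ⟪α, α⟫ ≠ 0 := ne_of_gt (inner_self_pos' hα)
  simp only [sRefl_apply, inner_sub_left, inner_sub_right, real_inner_smul_left,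
    real_inner_smul_right]
  rw [real_inner_comm α u, real_inner_comm v α]
  field_simp
  ring

lemma sRefl_invol (α v : V) : sRefl α (sRefl α v) = v := by
  rcases eq_or_ne α 0 with rfl | hα
  · simp [sRefl, coroot]
  have h2 : ⟪α, coroot α⟫ = 2 := inner_coroot_self hα
  simp only [sRefl, inner_sub_left, real_inner_smul_left, h2, sub_smul, smul_smul]
  module

lemma sRefl_self {α : V} (hα : α ≠ 0) : sRefl α α = -α := by
  rw [sRefl, inner_coroot_self hα]; module

/-- An irreducible reduced crystallographic root system in the real inner product
space `V`, together with a chosen set of positive roots and simple roots. -/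
structure RootSystemData (V : Type*) [NormedAddCommGroup V] [InnerProductSpace ℝ V] where
  n : ℕ
  roots : Set V
  roots_finite : roots.Finite
  roots_nonzero : (0 : V) ∉ roots
  roots_span : Submodule.span ℝ roots = ⊤
  refl_mem : ∀ α ∈ roots, ∀ β ∈ roots, sRefl α β ∈ roots
  reduced : ∀ α ∈ roots, ∀ c : ℝ, c • α ∈ roots → c • α = α ∨ c • α = -α
  crystallographic : ∀ α ∈ roots, ∀ β ∈ roots, ∃ m : ℤ, ⟪β, coroot α⟫ = (m : ℝ)
  pos : Set V
  pos_subset : pos ⊆ roots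
  pos_union : roots = pos ∪ (-pos)
  simple : Fin n → V
  simple_mem : ∀ i, simple i ∈ pos
  simple_li : LinearIndependent ℝ simple
  simple_span : Submodule.span ℝ (Set.range simple) = ⊤
  pos_combo : ∀ α ∈ pos, ∃ c : Fin n → ℕ, α = ∑ i, (c i : ℝ) • simple i
  irred : ∀ S₁ S₂ : Set V, roots = S₁ ∪ S₂ →
    (∀ α ∈ S₁, ∀ β ∈ S₂, ⟪α, β⟫ = 0) → S₁ = ∅ ∨ S₂ = ∅

namespace RootSystemData

variable (R : RootSystemData V)

/-- The Weyl group `W`: all finite compositions of reflections in roots. -/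
def weyl : Set (V → V) :=
  {w | ∃ l : List V, (∀ α ∈ l, α ∈ R.roots) ∧ w = (l.map sRefl).foldr (· ∘ ·) id}

/-- The orbit `W(v)` of a vector under the Weyl group. -/
def orbit (v : V) : Set V := {u | ∃ w ∈ R.weyl, u = w v}

/-- The weight lattice `P`. -/
def weightLattice : Set V :=
  {v | ∀ α ∈ R.roots, ∃ m : ℤ, ⟪v, coroot α⟫ = (m : ℝ)}

/-- The permutohedron `Π(v) = ConvexHull W(v)`. -/
def perm (v : V) : Set V := convexHull ℝ (R.orbit v)

/-- The discrete permutohedron `Π^Q(λ) = Π(λ) ∩ (Q+λ)`. -/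
def permQ (lam : V) : Set V :=
  R.perm lam ∩ {v | v - lam ∈ Submodule.span ℤ R.roots}

/-- Dominance: nonnegative pairing with all simple coroots. -/
def IsDominant (v : V) : Prop := ∀ i, 0 ≤ ⟪v, coroot (R.simple i)⟫

/-- `W`-invariance of a function `𝐤 : Φ → ℕ`. -/
def IsWInvariant (k : V → ℕ) : Prop := ∀ w ∈ R.weyl, ∀ α ∈ R.roots, k (w α) = k α

/-- Symmetric interval-firing: `λ → λ+α` for `α ∈ Φ⁺` whenever
`⟨λ,α∨⟩+1 ∈ {−𝐤(α),…,𝐤(α)}`. -/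
def symFire (k : V → ℕ) (lam mu : V) : Prop :=
  lam ∈ R.weightLattice ∧ ∃ α ∈ R.pos, mu = lam + α ∧
    -(k α : ℝ) ≤ ⟪lam, coroot α⟫ + 1 ∧ ⟪lam, coroot α⟫ + 1 ≤ (k α : ℝ)

/-- Truncated interval-firing: `λ → λ+α` for `α ∈ Φ⁺` whenever
`⟨λ,α∨⟩+1 ∈ {−𝐤(α)+1,…,𝐤(α)}`. -/
def trFire (k : V → ℕ) (lam mu : V) : Prop :=
  lam ∈ R.weightLattice ∧ ∃ α ∈ R.pos, mu = lam + α ∧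
    -(k α : ℝ) + 1 ≤ ⟪lam, coroot α⟫ + 1 ∧ ⟪lam, coroot α⟫ + 1 ≤ (k α : ℝ)

/-- All roots have the same length. -/
def SimplyLaced : Prop := ∀ α ∈ R.roots, ∀ β ∈ R.roots, ‖α‖ = ‖β‖

/-- A root of maximal length. -/
def IsLongRoot (α : V) : Prop := α ∈ R.roots ∧ ∀ β ∈ R.roots, ‖β‖ ≤ ‖α‖

/-- A root which is not of maximal length. -/
def IsShortRoot (α : V) : Prop := α ∈ R.roots ∧ ¬ R.IsLongRoot α

/-- `𝐤` is good: either `Φ` is simply laced, or `𝐤` vanishing on short roots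
implies `𝐤` vanishing on all (in particular long) roots. -/
def IsGood (k : V → ℕ) : Prop :=
  R.SimplyLaced ∨ ((∀ α, R.IsShortRoot α → k α = 0) → ∀ β ∈ R.roots, k β = 0)

/-- The product of the simple reflections indexed by a word. -/
def wordProd (l : List (Fin R.n)) : V → V :=
  (l.map (fun i => sRefl (R.simple i))).foldr (· ∘ ·) id

/-- Coxeter length: the minimal length of a word in the simple reflections
expressing `w`. -/
def coxLen (w : V → V) : ℕ :=
  sInf {m : ℕ | ∃ l : List (Fin R.n), l.length = m ∧ w = R.wordProd l}

/-- The parabolic subgroup `W_I`: all compositions of simple reflections `s_{αᵢ}`, `i ∈ I`. -/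
def weylI (I : Set (Fin R.n)) : Set (V → V) :=
  {w | ∃ l : List (Fin R.n), (∀ i ∈ l, i ∈ I) ∧ w = R.wordProd l}

/-- The orbit `W_I(v)`. -/
def orbitI (I : Set (Fin R.n)) (v : V) : Set V := {u | ∃ w ∈ R.weylI I, u = w v}

/-- The discrete parabolic permutohedron `Π^Q_I(λ)`. -/
def permQI (I : Set (Fin R.n)) (lam : V) : Set V :=
  convexHull ℝ (R.orbitI I lam) ∩ {v | v - lam ∈ Submodule.span ℤ R.roots}

/-- Given a choice `dm` of dominant representatives, `I^{0,1}_λ` is the set of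
indices `i` with `⟨λ_dom, αᵢ∨⟩ ∈ {0,1}`. -/
def I01 (dm : V → V) (lam : V) : Set (Fin R.n) :=
  {i | ⟪dm lam, coroot (R.simple i)⟫ = 0 ∨ ⟪dm lam, coroot (R.simple i)⟫ = 1}

/-- The minimal length of an `α`-traverse in `Π^Q(λ)`. -/
def traverseLen (lam α : V) : ℕ :=
  sInf {ℓ : ℕ | ∃ mu : V, (∀ i : ℕ, i ≤ ℓ → mu - (i : ℝ) • α ∈ R.permQ lam) ∧
    mu + α ∉ R.permQ lam ∧ mu - ((ℓ : ℝ) + 1) • α ∉ R.permQ lam}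

/-- `m_λ(α) = min {cᵢ : αᵢ ∈ W(α)}` where `λ = Σ cᵢ ωᵢ` is dominant,
i.e. `cᵢ = ⟨λ, αᵢ∨⟩`. -/
def mVal (lam α : V) : ℕ :=
  sInf {c : ℕ | ∃ i, R.simple i ∈ R.orbit α ∧ (c : ℝ) = ⟪lam, coroot (R.simple i)⟫}

/-- Funny weights (only exist when `Φ` is not simply laced). -/
def IsFunny (lam : V) : Prop :=
  ¬ R.SimplyLaced ∧ ∃ l s : Fin R.n, R.IsLongRoot (R.simple l) ∧ R.IsShortRoot (R.simple s) ∧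
    ⟪R.simple l, coroot (R.simple s)⟫ ≠ 0 ∧
    ⟪lam, coroot (R.simple s)⟫ = 0 ∧ 1 ≤ ⟪lam, coroot (R.simple l)⟫ ∧
    ∀ i, R.IsLongRoot (R.simple i) → ⟪lam, coroot (R.simple l)⟫ ≤ ⟪lam, coroot (R.simple i)⟫

end RootSystemData

/-- The map `η_𝐤(λ) = λ + w_λ(ρ_𝐤)`, relative to a choice `fw` of fundamental
weights and a choice `wl` of minimal-length Weyl elements `λ ↦ w_λ`. -/
def etaMap (R : RootSystemData V) (fw : Fin R.n → V) (wl : V → V → V)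
    (k : V → ℕ) (lam : V) : V :=
  lam + wl lam (∑ i, (k (R.simple i) : ℝ) • fw i)

/-- Two points are in the same connected component of a relation if they are
related by its reflexive-transitive-symmetric closure. -/
def SameComponent (r : V → V → Prop) (x y : V) : Prop :=
  Relation.ReflTransGen (fun a b => r a b ∨ r b a) x y


namespace RootSystemData

omit [NormedAddCommGroup V] [InnerProductSpace ℝ V] in
lemma foldr_comp_comp (L : List (V → V)) (g : V → V) :
    L.foldr (· ∘ ·) g = (L.foldr (· ∘ ·) id) ∘ g := by
  induction L with
  | nil => rfl
  | cons f t ih => simp only [List.foldr_cons, ih]; rfl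

lemma weyl_comp (R : RootSystemData V) {w₁ w₂ : V → V} (h₁ : w₁ ∈ R.weyl)
    (h₂ : w₂ ∈ R.weyl) : (fun v => w₁ (w₂ v)) ∈ R.weyl := by
  obtain ⟨l₁, hl₁, rfl⟩ := h₁
  obtain ⟨l₂, hl₂, rfl⟩ := h₂
  refine ⟨l₁ ++ l₂, fun α hα => ?_, ?_⟩
  · rcases List.mem_append.1 hα with h | h
    · exact hl₁ α h
    · exact hl₂ α h
  · have key : (List.map sRefl (l₁ ++ l₂)).foldr (· ∘ ·) id =
        ((List.map sRefl l₁).foldr (· ∘ ·) id) ∘ ((List.map sRefl l₂).foldr (· ∘ ·) id) := by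
      rw [List.map_append, List.foldr_append]
      exact foldr_comp_comp _ _
    rw [key]
    rfl

lemma sRefl_mem_weyl (R : RootSystemData V) {α : V} (hα : α ∈ R.roots) :
    sRefl α ∈ R.weyl :=
  ⟨[α], by simp [hα], rfl⟩

lemma weyl_props (R : RootSystemData V) {w : V → V} (hw : w ∈ R.weyl) :
    (∀ u v, w (u + v) = w u + w v) ∧ (∀ (c : ℝ) (u : V), w (c • u) = c • w u) ∧
    (∀ u v, ⟪w u, w v⟫ = ⟪u, v⟫) ∧ (∀ α ∈ R.roots, w α ∈ R.roots) ∧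
    ∃ w', w' ∈ R.weyl ∧ (∀ v, w' (w v) = v) ∧ (∀ v, w (w' v) = v) := by
  obtain ⟨l, hl, rfl⟩ := hw
  induction l with
  | nil =>
    exact ⟨fun u v => rfl, fun c u => rfl, fun u v => rfl, fun α h => h,
      id, ⟨[], by simp, rfl⟩, fun v => rfl, fun v => rfl⟩
  | cons a t ih =>
    have ha : a ∈ R.roots := hl a (by simp)
    obtain ⟨ih1, ih2, ih3, ih4, w', hw', hwl, hwr⟩ := ih (fun α h => hl α (by simp [h]))
    set g := (t.map sRefl).foldr (· ∘ ·) id with hg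
    have hcons : ((a :: t).map sRefl).foldr (· ∘ ·) id = fun v => sRefl a (g v) := rfl
    rw [hcons]
    have p1 : ∀ u v : V, sRefl a (g (u + v)) = sRefl a (g u) + sRefl a (g v) := by
      intro u v
      rw [ih1, sRefl_add]
    have p2 : ∀ (c : ℝ) (u : V), sRefl a (g (c • u)) = c • sRefl a (g u) := by
      intro c u
      rw [ih2, sRefl_smul]
    have p3 : ∀ u v : V, ⟪sRefl a (g u), sRefl a (g v)⟫ = ⟪u, v⟫ := by
      intro u v
      rw [sRefl_inner, ih3]
    have p5 : ∀ v : V, w' (sRefl a (sRefl a (g v))) = v := by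
      intro v
      rw [sRefl_invol, hwl]
    have p6 : ∀ v : V, sRefl a (g (w' (sRefl a v))) = v := by
      intro v
      rw [hwr, sRefl_invol]
    exact ⟨p1, p2, p3, fun α h => R.refl_mem a ha _ (ih4 α h),
      fun v => w' (sRefl a v), R.weyl_comp hw' (R.sRefl_mem_weyl ha), p5, p6⟩

lemma weyl_coroot (R : RootSystemData V) {w : V → V} (hw : w ∈ R.weyl) (α : V) :
    coroot (w α) = w (coroot α) := by
  obtain ⟨-, hsmul, hinner, -, -⟩ := R.weyl_props hw
  rw [coroot, coroot, hinner, hsmul]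

lemma weyl_inner_coroot (R : RootSystemData V) {w : V → V} (hw : w ∈ R.weyl) (u α : V) :
    ⟪w u, coroot (w α)⟫ = ⟪u, coroot α⟫ := by
  obtain ⟨-, -, hinner, -, -⟩ := R.weyl_props hw
  rw [R.weyl_coroot hw, hinner]

lemma weyl_lattice (R : RootSystemData V) {w : V → V} (hw : w ∈ R.weyl) {v : V}
    (hv : v ∈ R.weightLattice) : w v ∈ R.weightLattice := by
  intro α hα
  obtain ⟨-, -, -, -, w', hw', hwl, hwr⟩ := R.weyl_props hw
  obtain ⟨-, -, -, hroots', -⟩ := R.weyl_props hw'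
  have : α = w (w' α) := (hwr α).symm
  rw [this, R.weyl_inner_coroot hw]
  exact hv _ (hroots' α hα)

lemma lattice_add (R : RootSystemData V) {u v : V} (hu : u ∈ R.weightLattice)
    (hv : v ∈ R.weightLattice) : u + v ∈ R.weightLattice := by
  intro α hα
  obtain ⟨m, hm⟩ := hu α hα
  obtain ⟨m', hm'⟩ := hv α hα
  exact ⟨m + m', by rw [inner_add_left, hm, hm']; push_cast; ring⟩

lemma lattice_neg (R : RootSystemData V) {v : V} (hv : v ∈ R.weightLattice) :
    -v ∈ R.weightLattice := by
  intro α hα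
  obtain ⟨m, hm⟩ := hv α hα
  exact ⟨-m, by rw [inner_neg_left, hm]; push_cast; ring⟩

lemma root_ne_zero (R : RootSystemData V) {α : V} (hα : α ∈ R.roots) : α ≠ 0 :=
  fun h => R.roots_nonzero (h ▸ hα)

lemma k_neg (R : RootSystemData V) {k : V → ℕ} (hk : R.IsWInvariant k) {γ : V}
    (hγ : γ ∈ R.roots) : k (-γ) = k γ := by
  have := hk (sRefl γ) (R.sRefl_mem_weyl hγ) γ hγ
  rwa [sRefl_self (R.root_ne_zero hγ)] at this

lemma neg_root (R : RootSystemData V) {α : V} (hα : α ∈ R.roots) : -α ∈ R.roots := by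
  rw [R.pos_union] at hα ⊢
  rcases hα with h | h
  · exact Or.inr (by simpa using h)
  · exact Or.inl (by simpa using h)

end RootSystemData

namespace RootSystemData

lemma rho_coroot_simple (R : RootSystemData V) {fw : Fin R.n → V}
    (hfw : ∀ i j, ⟪fw i, coroot (R.simple j)⟫ = if i = j then (1 : ℝ) else 0)
    {ρ : V} (hρ : ρ = ∑ i, fw i) (j : Fin R.n) : ⟪ρ, coroot (R.simple j)⟫ = 1 := by
  subst hρ
  rw [sum_inner]
  simp [hfw]

lemma rho_coroot_pos (R : RootSystemData V) {fw : Fin R.n → V}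
    (hfw : ∀ i j, ⟪fw i, coroot (R.simple j)⟫ = if i = j then (1 : ℝ) else 0)
    {ρ : V} (hρ : ρ = ∑ i, fw i) {β : V} (hβ : β ∈ R.pos) : 0 < ⟪ρ, coroot β⟫ := by
  have hβr : β ∈ R.roots := R.pos_subset hβ
  have hβ0 : β ≠ 0 := R.root_ne_zero hβr
  obtain ⟨c, hc⟩ := R.pos_combo β hβ
  have hsimple : ∀ i, 0 < ⟪ρ, R.simple i⟫ := by
    intro i
    have h1 : ⟪ρ, coroot (R.simple i)⟫ = 1 := R.rho_coroot_simple hfw hρ i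
    have hne : R.simple i ≠ 0 := R.root_ne_zero (R.pos_subset (R.simple_mem i))
    have hpos : 0 < ⟪R.simple i, R.simple i⟫ := inner_self_pos' hne
    rw [inner_coroot'] at h1
    field_simp at h1
    linarith
  have hex : ∃ i, c i ≠ 0 := by
    by_contra hno
    push_neg at hno
    exact hβ0 (by rw [hc]; simp [hno])
  obtain ⟨i0, hi0⟩ := hex
  have hsum : 0 < ⟪ρ, β⟫ := by
    rw [hc, inner_sum]
    simp only [real_inner_smul_right]
    refine Finset.sum_pos' (fun i _ => mul_nonneg (Nat.cast_nonneg _) (le_of_lt (hsimple i)))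
      ⟨i0, Finset.mem_univ i0, mul_pos ?_ (hsimple i0)⟩
    exact_mod_cast Nat.pos_of_ne_zero hi0
  rw [inner_coroot']
  exact mul_pos (div_pos two_pos (inner_self_pos' hβ0)) hsum

lemma rho_coroot_le (R : RootSystemData V) {fw : Fin R.n → V}
    (hfw : ∀ i j, ⟪fw i, coroot (R.simple j)⟫ = if i = j then (1 : ℝ) else 0)
    {ρ : V} (hρ : ρ = ∑ i, fw i) {θc : V}
    (hθhigh : ∀ β ∈ R.pos, ∃ c : Fin R.n → ℕ,
      θc - coroot β = ∑ i, (c i : ℝ) • coroot (R.simple i))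
    {h : ℝ} (hh : h = ⟪ρ, θc⟫ + 1) {β : V} (hβ : β ∈ R.pos) :
    ⟪ρ, coroot β⟫ ≤ h - 1 := by
  obtain ⟨c, hc⟩ := hθhigh β hβ
  have key : ⟪ρ, θc⟫ - ⟪ρ, coroot β⟫ = ∑ i, (c i : ℝ) := by
    rw [← inner_sub_right, hc, inner_sum]
    simp [real_inner_smul_right, R.rho_coroot_simple hfw hρ]
  have h0 : 0 ≤ ∑ i, (c i : ℝ) := Finset.sum_nonneg fun i _ => Nat.cast_nonneg _
  rw [hh]
  linarith

lemma aux (R : RootSystemData V)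
    (fw : Fin R.n → V)
    (hfw : ∀ i j, ⟪fw i, coroot (R.simple j)⟫ = if i = j then (1 : ℝ) else 0)
    (ρ : V) (hρ : ρ = ∑ i, fw i)
    (θc : V) (hθc : ∃ γ ∈ R.pos, θc = coroot γ)
    (hθhigh : ∀ β ∈ R.pos, ∃ c : Fin R.n → ℕ,
      θc - coroot β = ∑ i, (c i : ℝ) • coroot (R.simple i))
    (h : ℝ) (hh : h = ⟪ρ, θc⟫ + 1)
    (k : V → ℕ) (hk : R.IsWInvariant k)
    (w : V → V) (hw : w ∈ R.weyl)
    (hwC : ∃ p ∈ R.weightLattice, ρ - w ρ = h • p)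
    (φ : V → V) (hφ : ∀ v, φ v = w (v - h⁻¹ • ρ) + h⁻¹ • ρ) :
    (∀ lam ∈ R.weightLattice, φ lam ∈ R.weightLattice) ∧
    (∀ lam ∈ R.weightLattice, ∀ mu ∈ R.weightLattice, R.trFire k lam mu →
      R.trFire k (φ lam) (φ mu) ∨ R.trFire k (φ mu) (φ lam)) := by
  obtain ⟨p, hp, hpρ⟩ := hwC
  obtain ⟨hwadd, hwsmul, hwinner, hwroots, w', hw', hwl, hwr⟩ := R.weyl_props hw
  have hw_sub : ∀ u v, w (u - v) = w u - w v := by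
    intro u v
    have e : u - v = u + (-1 : ℝ) • v := by module
    rw [e, hwadd, hwsmul]
    module
  obtain ⟨γ, hγ, rfl⟩ := hθc
  have hγpos := R.rho_coroot_pos hfw hρ hγ
  have h1 : 1 < h := by rw [hh]; linarith
  have h0 : (0 : ℝ) < h := by linarith
  have hφ' : ∀ v, φ v = w v + p := by
    intro v
    have e1 : h⁻¹ • (ρ - w ρ) = p := by
      rw [hpρ, smul_smul, inv_mul_cancel₀ (ne_of_gt h0), one_smul]
    rw [hφ, hw_sub, hwsmul, ← e1]
    module
  have part1 : ∀ lam ∈ R.weightLattice, φ lam ∈ R.weightLattice := by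
    intro lam hlam
    rw [hφ']
    exact R.lattice_add (R.weyl_lattice hw hlam) hp
  refine ⟨part1, ?_⟩
  intro lam hlam mu hmu hfire
  obtain ⟨-, α, hα, hmueq, hb1, hb2⟩ := hfire
  have hαr : α ∈ R.roots := R.pos_subset hα
  have hwαr : w α ∈ R.roots := hwroots α hαr
  obtain ⟨m, hm⟩ := hp (w α) hwαr
  have hmh : h * m = ⟪ρ, coroot (w α)⟫ - ⟪ρ, coroot α⟫ := by
    have e := congrArg (fun x => ⟪x, coroot (w α)⟫) hpρ
    simp only [inner_sub_left, real_inner_smul_left, hm] at e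
    have e2 : ⟪w ρ, coroot (w α)⟫ = ⟪ρ, coroot α⟫ := R.weyl_inner_coroot hw ρ α
    linarith
  have hAα1 : 0 < ⟪ρ, coroot α⟫ := R.rho_coroot_pos hfw hρ hα
  have hAα2 : ⟪ρ, coroot α⟫ ≤ h - 1 := R.rho_coroot_le hfw hρ hθhigh hh hα
  have hlamφ : φ lam ∈ R.weightLattice := part1 lam hlam
  have hmuφ : φ mu ∈ R.weightLattice := part1 mu hmu
  have hφmu : φ mu = φ lam + w α := by
    rw [hφ' mu, hφ' lam, hmueq, hwadd]
    abel
  have hinnerφ : ⟪φ lam, coroot (w α)⟫ = ⟪lam, coroot α⟫ + m := by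
    rw [hφ' lam, inner_add_left, hm, R.weyl_inner_coroot hw]
  have hkwα : k (w α) = k α := hk w hw α hαr
  have hcases : w α ∈ R.pos ∪ -R.pos := by rw [← R.pos_union]; exact hwαr
  rcases hcases with hwp | hwn
  · have hA1 : 0 < ⟪ρ, coroot (w α)⟫ := R.rho_coroot_pos hfw hρ hwp
    have hA2 : ⟪ρ, coroot (w α)⟫ ≤ h - 1 := R.rho_coroot_le hfw hρ hθhigh hh hwp
    have hm0 : m = 0 := by
      have l1 : (-1 : ℝ) < m := by nlinarith
      have l2 : (m : ℝ) < 1 := by nlinarith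
      have l1' : (-1 : ℤ) < m := by exact_mod_cast l1
      have l2' : m < (1 : ℤ) := by exact_mod_cast l2
      omega
    left
    refine ⟨hlamφ, w α, hwp, hφmu, ?_, ?_⟩
    · rw [hinnerφ, hm0, hkwα]; push_cast; linarith
    · rw [hinnerφ, hm0, hkwα]; push_cast; linarith
  · rw [Set.mem_neg] at hwn
    have hA1 : 0 < ⟪ρ, coroot (-w α)⟫ := R.rho_coroot_pos hfw hρ hwn
    have hA2 : ⟪ρ, coroot (-w α)⟫ ≤ h - 1 := R.rho_coroot_le hfw hρ hθhigh hh hwn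
    have hcneg : coroot (-w α) = -coroot (w α) := coroot_neg _
    rw [hcneg, inner_neg_right] at hA1 hA2
    have hm1 : m = -1 := by
      have l1 : (-2 : ℝ) < m := by nlinarith
      have l2 : (m : ℝ) < 0 := by nlinarith
      have l1' : (-2 : ℤ) < m := by exact_mod_cast l1
      have l2' : m < (0 : ℤ) := by exact_mod_cast l2
      omega
    right
    have hkβ : k (-w α) = k α := by rw [R.k_neg hk hwαr, hkwα]
    have hφlam : φ lam = φ mu + -w α := by rw [hφmu]; abel
    have h2 : ⟪w α, coroot (w α)⟫ = 2 := inner_coroot_self (R.root_ne_zero hwαr)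
    have hinnermu : ⟪φ mu, coroot (-w α)⟫ = -⟪lam, coroot α⟫ - 1 := by
      rw [hφmu, hcneg, inner_neg_right, inner_add_left, hinnerφ, hm1, h2]
      push_cast
      ring
    refine ⟨hmuφ, -w α, hwn, hφlam, ?_, ?_⟩
    · rw [hinnermu, hkβ]; linarith
    · rw [hinnermu, hkβ]; linarith

end RootSystemData

/-- The affine maps `v ↦ w(v − ρ/h) + ρ/h` for `w ∈ C = {w ∈ W : ρ − w(ρ) ∈ hP}`
are automorphisms of the undirected graph of truncated interval-firing. -/
theorem statement3 (R : RootSystemData V)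
    (fw : Fin R.n → V)
    (hfw : ∀ i j, ⟪fw i, coroot (R.simple j)⟫ = if i = j then (1 : ℝ) else 0)
    (ρ : V) (hρ : ρ = ∑ i, fw i)
    (θc : V) (hθc : ∃ γ ∈ R.pos, θc = coroot γ)
    (hθhigh : ∀ β ∈ R.pos, ∃ c : Fin R.n → ℕ,
      θc - coroot β = ∑ i, (c i : ℝ) • coroot (R.simple i))
    (h : ℝ) (hh : h = ⟪ρ, θc⟫ + 1)
    (k : V → ℕ) (hk : R.IsWInvariant k)
    (w : V → V) (hw : w ∈ R.weyl)
    (hwC : ∃ p ∈ R.weightLattice, ρ - w ρ = h • p)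
    (φ : V → V) (hφ : ∀ v, φ v = w (v - h⁻¹ • ρ) + h⁻¹ • ρ) :
    (∀ lam ∈ R.weightLattice, φ lam ∈ R.weightLattice) ∧
    (∀ lam ∈ R.weightLattice, ∀ mu ∈ R.weightLattice,
      ((R.trFire k lam mu ∨ R.trFire k mu lam) ↔
        (R.trFire k (φ lam) (φ mu) ∨ R.trFire k (φ mu) (φ lam)))) := by
  obtain ⟨part1, part2⟩ := R.aux fw hfw ρ hρ θc hθc hθhigh h hh k hk w hw hwC φ hφ
  refine ⟨part1, ?_⟩
  obtain ⟨p, hp, hpρ⟩ := hwC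
  obtain ⟨hwadd, hwsmul, hwinner, hwroots, w', hw', hwl, hwr⟩ := R.weyl_props hw
  obtain ⟨hwadd', hwsmul', -, -, -⟩ := R.weyl_props hw'
  have hw_sub' : ∀ u v, w' (u - v) = w' u - w' v := by
    intro u v
    have e : u - v = u + (-1 : ℝ) • v := by module
    rw [e, hwadd', hwsmul']
    module
  have hwC' : ∃ q ∈ R.weightLattice, ρ - w' ρ = h • q := by
    refine ⟨-(w' p), R.lattice_neg (R.weyl_lattice hw' hp), ?_⟩
    have e : w ρ = ρ - h • p := by rw [← hpρ]; abel
    have e2 : w' (w ρ) = ρ := hwl ρ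
    calc ρ - w' ρ = w' (w ρ) - w' ρ := by rw [e2]
      _ = w' (w ρ - ρ) := (hw_sub' _ _).symm
      _ = w' ((0 : V) - h • p) := by rw [e]; congr 1; abel
      _ = w' 0 - h • w' p := by rw [hw_sub', hwsmul']
      _ = h • -(w' p) := by
          have h0 : w' 0 = 0 := by
            have := hw_sub' 0 0
            simpa using this
          rw [h0, smul_neg]
          abel
  set φ' : V → V := fun v => w' (v - h⁻¹ • ρ) + h⁻¹ • ρ with hφ'def
  have hid : ∀ v, φ' (φ v) = v := by
    intro v
    show w' (φ v - h⁻¹ • ρ) + h⁻¹ • ρ = v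
    rw [hφ v, add_sub_cancel_right, hwl]
    abel
  obtain ⟨part1', part2'⟩ := R.aux fw hfw ρ hρ θc hθc hθhigh h hh k hk w' hw' hwC' φ'
    (fun v => rfl)
  intro lam hlam mu hmu
  constructor
  · rintro (hf | hf)
    · exact part2 lam hlam mu hmu hf
    · exact (part2 mu hmu lam hlam hf).symm
  · rintro (hf | hf)
    · have := part2' (φ lam) (part1 lam hlam) (φ mu) (part1 mu hmu) hf
      rw [hid lam, hid mu] at this
      exact this
    · have := part2' (φ mu) (part1 mu hmu) (φ lam) (part1 lam hlam) hf
      rw [hid lam, hid mu] at this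
      exact this.symm
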